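/- Let α ∈ [0,1) and let (Z_t)_{t∈ℤ} be independent, each with the standard Fréchet(1) distribution, and define the stationary ARMAX process X_s = sup_{j≥0} (1−α)·α^j·Z_{s−j} for s ∈ ℤ. Then for every integer b ≥ 1 and every x > 0, P( max_{s=1,…,b} X_s ≤ x ) = exp( −(1 + (1−α)(b−1))/x ) = F(x)^{1+θ(b−1)}, where F(x) = exp(−1/x) is the stationary cdf and θ = 1−α is the extremal index of the process. -/

import Mathlib

open MeasureTheory ProbabilityTheory

lemma aux_single {Ω : Type*} [MeasurableSpace Ω] (μ : Measure Ω) [IsProbabilityMeasure μ]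
    (W : Ω → ℝ) (hW : ∀ z : ℝ, 0 < z → μ {ω | W ω ≤ z} = ENNReal.ofReal (Real.exp (-1 / z)))
    {c x : ℝ} (hc : 0 ≤ c) (hx : 0 < x) :
    μ {ω | c * W ω ≤ x} = ENNReal.ofReal (Real.exp (-c / x)) := by
  rcases hc.eq_or_lt with h | h
  · have : {ω | c * W ω ≤ x} = Set.univ := by
      ext ω; simp [← h, hx.le]
    rw [this, measure_univ, ← h]
    simp
  · have hset : {ω | c * W ω ≤ x} = {ω | W ω ≤ x / c} := by
      ext ω
      rw [Set.mem_setOf_eq, Set.mem_setOf_eq, le_div_iff₀ h, mul_comm]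
    rw [hset, hW _ (div_pos hx h)]
    congr 1
    rw [div_div_eq_mul_div, neg_one_mul, neg_div]

theorem armax_block_maximum_cdf
    {Ω : Type*} [MeasurableSpace Ω] (μ : Measure Ω) [IsProbabilityMeasure μ]
    (α : ℝ) (hα : α ∈ Set.Ico (0 : ℝ) 1)
    (Z : ℤ → Ω → ℝ) (hZ_meas : ∀ t, Measurable (Z t))
    (hZ_indep : iIndepFun Z μ)
    (hZ_cdf : ∀ t, ∀ z : ℝ, 0 < z →
      μ {ω | Z t ω ≤ z} = ENNReal.ofReal (Real.exp (-1 / z)))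
    (X : ℤ → Ω → ℝ)
    (hX : ∀ s ω, X s ω = ⨆ j : ℕ, (1 - α) * α ^ j * Z (s - j) ω) :
    ∀ b : ℕ, 1 ≤ b → ∀ x : ℝ, 0 < x →
      μ {ω | ∀ s : ℤ, 1 ≤ s → s ≤ (b : ℤ) → X s ω ≤ x} =
          ENNReal.ofReal (Real.exp (-(1 + (1 - α) * ((b : ℝ) - 1)) / x)) ∧
        Real.exp (-(1 + (1 - α) * ((b : ℝ) - 1)) / x) =
          Real.exp (-1 / x) ^ (1 + (1 - α) * ((b : ℝ) - 1)) := by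
  obtain ⟨hα0, hα1⟩ := hα
  have h1α : (0:ℝ) < 1 - α := by linarith
  intro b hb x hx
  constructor
  case right =>
    rw [Real.rpow_def_of_pos (Real.exp_pos _), Real.log_exp]
    congr 1
    ring
  -- coefficients
  set c : ℤ → ℝ := fun t => (1 - α) * α ^ (1 - t).toNat with hc_def
  have hc_nonneg : ∀ t, 0 ≤ c t := fun t => mul_nonneg h1α.le (pow_nonneg hα0 _)
  set C : ℤ → Set Ω := fun t => {ω | c t * Z t ω ≤ x} with hC_def
  have hC_mset : ∀ t, MeasurableSet {z : ℝ | c t * z ≤ x} := fun t =>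
    measurableSet_le (measurable_id.const_mul _) measurable_const
  have hC_meas : ∀ t, MeasurableSet (C t) := fun t => (hC_mset t).preimage (hZ_meas t)
  have hC_val : ∀ t, μ (C t) = ENNReal.ofReal (Real.exp (-(c t) / x)) := fun t =>
    aux_single μ (Z t) (hZ_cdf t) (hc_nonneg t) hx
  set T : ℝ := 1 + (1 - α) * ((b:ℝ) - 1) with hT_def
  set A : Set Ω := ⋂ (t : ℤ) (_ : t ≤ (b:ℤ)), C t with hA_def
  set S : ℕ → Finset ℤ := fun n => Finset.Icc ((b:ℤ) - n) b with hS_def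
  set An : ℕ → Set Ω := fun n => ⋂ t ∈ S n, C t with hAn_def
  -- measure of finite intersections
  have hAn_val : ∀ n, μ (An n) = ENNReal.ofReal (Real.exp (-(∑ t ∈ S n, c t) / x)) := by
    intro n
    have hpre : An n = ⋂ t ∈ S n, Z t ⁻¹' {z | c t * z ≤ x} := rfl
    rw [hpre, hZ_indep.measure_inter_preimage_eq_mul (S n)
      (sets := fun t => {z | c t * z ≤ x}) (fun t _ => hC_mset t)]
    have : ∀ t ∈ S n, μ (Z t ⁻¹' {z | c t * z ≤ x}) = ENNReal.ofReal (Real.exp (-(c t) / x)) :=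
      fun t _ => hC_val t
    rw [Finset.prod_congr rfl this,
      ← ENNReal.ofReal_prod_of_nonneg (fun t _ => (Real.exp_pos _).le), ← Real.exp_sum]
    congr 2
    rw [← Finset.sum_div, ← Finset.sum_neg_distrib]
  -- partial sums converge to T
  set f : ℕ → ℝ := fun k => (1 - α) * α ^ (1 + (k:ℤ) - b).toNat with hf_def
  have hsum1 : HasSum (fun k : ℕ => f (k + b)) α := by
    have h := (hasSum_geometric_of_lt_one hα0 hα1).mul_left ((1 - α) * α)
    have h2 : (1 - α) * α * (1 - α)⁻¹ = α := by field_simp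
    rw [h2] at h
    suffices hfun : (fun k : ℕ => f (k + b)) = fun i => (1 - α) * α * α ^ i by rw [hfun]; exact h
    funext k
    have he : (1 + ((k + b : ℕ) : ℤ) - b).toNat = k + 1 := by push_cast; omega
    rw [hf_def]
    simp only
    rw [he, pow_succ]
    ring
  have hfb : ∑ i ∈ Finset.range b, f i = b * (1 - α) := by
    have : ∀ i ∈ Finset.range b, f i = (1 - α) := by
      intro i hi
      have hi' := Finset.mem_range.mp hi
      have he : (1 + (i:ℤ) - b).toNat = 0 := by omega
      rw [hf_def]; simp only; rw [he, pow_zero, mul_one]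
    rw [Finset.sum_congr rfl this, Finset.sum_const, Finset.card_range, nsmul_eq_mul]
  have hfT : HasSum f T := by
    have h := (hasSum_nat_add_iff (f := f) b).mp hsum1
    rw [hfb] at h
    have hT' : T = α + ↑b * (1 - α) := by rw [hT_def]; ring
    rw [hT']; exact h
  have hsum_eq : ∀ n : ℕ, ∑ t ∈ S n, c t = ∑ k ∈ Finset.range (n + 1), f k := by
    intro n
    refine Finset.sum_nbij' (fun t => (b - t).toNat) (fun k => (b:ℤ) - k) ?_ ?_ ?_ ?_ ?_
    · intro t ht
      rw [hS_def] at ht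
      rw [Finset.mem_Icc] at ht
      rw [Finset.mem_range]
      beta_reduce
      omega
    · intro k hk
      rw [Finset.mem_range] at hk
      rw [hS_def, Finset.mem_Icc]
      beta_reduce
      omega
    · intro t ht
      rw [hS_def, Finset.mem_Icc] at ht
      beta_reduce
      omega
    · intro k hk
      rw [Finset.mem_range] at hk
      beta_reduce
      omega
    · intro t ht
      rw [hS_def, Finset.mem_Icc] at ht
      rw [hc_def, hf_def]
      simp only
      congr 2
      omega
  have hS_tendsto : Filter.Tendsto (fun n => ∑ t ∈ S n, c t) Filter.atTop (nhds T) := by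
    simp only [hsum_eq]
    exact hfT.tendsto_sum_nat.comp (Filter.tendsto_add_atTop_nat 1)
  -- A as decreasing limit
  have hAnti : Antitone An := by
    intro n m hnm ω hω
    simp only [hAn_def, Set.mem_iInter] at hω ⊢
    intro t ht
    refine hω t ?_
    rw [hS_def, Finset.mem_Icc] at ht ⊢
    omega
  have hInter : ⋂ n, An n = A := by
    ext ω
    simp only [hA_def, hAn_def, Set.mem_iInter]
    constructor
    · intro h t ht
      refine h (b - t).toNat t ?_
      rw [hS_def, Finset.mem_Icc]
      omega
    · intro h n t ht
      rw [hS_def, Finset.mem_Icc] at ht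
      exact h t ht.2
  have hμA : μ A = ENNReal.ofReal (Real.exp (-T / x)) := by
    have h1 := tendsto_measure_iInter_atTop (μ := μ) (s := An)
      (fun n => (MeasurableSet.biInter (Finset.countable_toSet _)
        (fun t _ => hC_meas t)).nullMeasurableSet) hAnti ⟨0, measure_ne_top μ _⟩
    rw [hInter] at h1
    have h2 : Filter.Tendsto (fun n => μ (An n)) Filter.atTop
        (nhds (ENNReal.ofReal (Real.exp (-T / x)))) := by
      simp only [hAn_val]
      exact (ENNReal.continuous_ofReal.tendsto _).comp
        ((Real.continuous_exp.tendsto _).comp (hS_tendsto.neg.div_const x))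
    exact tendsto_nhds_unique h1 h2
  -- null sets of unboundedness
  set N : ℤ → Set Ω :=
    fun s => {ω | ¬ BddAbove (Set.range fun j : ℕ => (1-α) * α ^ j * Z (s - j) ω)} with hN_def
  have hNull : ∀ s : ℤ, μ (N s) = 0 := by
    intro s
    set D : ℕ → Set Ω := fun j => {ω | 1 < (1-α) * α ^ j * Z (s - j) ω} with hD_def
    have hDle : ∀ j, μ (D j) ≤ ENNReal.ofReal ((1-α) * α ^ j) := by
      intro j
      set cc := (1-α) * α ^ j with hcc
      have hcc0 : 0 ≤ cc := mul_nonneg h1α.le (pow_nonneg hα0 _)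
      have hDc : D j = {ω | cc * Z (s - j) ω ≤ 1}ᶜ := by
        ext ω; simp [hD_def, not_le, hcc]
      have hmeas : MeasurableSet {ω | cc * Z (s - j) ω ≤ 1} := by
        have : {ω | cc * Z (s - j) ω ≤ 1} = Z (s - j) ⁻¹' {z | cc * z ≤ 1} := rfl
        rw [this]
        exact (measurableSet_le (measurable_id.const_mul _) measurable_const).preimage
          (hZ_meas _)
      rw [hDc, measure_compl hmeas (measure_ne_top μ _), measure_univ,
        aux_single μ _ (hZ_cdf _) hcc0 one_pos, div_one]
      refine tsub_le_iff_right.mpr ?_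
      rw [← ENNReal.ofReal_add hcc0 (Real.exp_pos _).le, ← ENNReal.ofReal_one]
      refine ENNReal.ofReal_le_ofReal ?_
      have := Real.add_one_le_exp (-cc)
      linarith
    have hsumD : ∑' j, μ (D j) ≠ ⊤ := by
      refine ne_top_of_le_ne_top ?_ (ENNReal.tsum_le_tsum hDle)
      rw [← ENNReal.ofReal_tsum_of_nonneg (fun j => mul_nonneg h1α.le (pow_nonneg hα0 _))
        ((summable_geometric_of_lt_one hα0 hα1).mul_left _)]
      exact ENNReal.ofReal_ne_top
    refine measure_mono_null ?_ (measure_limsup_atTop_eq_zero hsumD)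
    intro ω hω
    rw [Filter.mem_limsup_iff_frequently_mem]
    by_contra hfreq
    apply hω
    rw [Filter.not_frequently] at hfreq
    obtain ⟨J, hJ⟩ := Filter.eventually_atTop.mp hfreq
    refine ⟨1 + ∑ i ∈ Finset.range J, |(1-α) * α ^ i * Z (s - i) ω|, ?_⟩
    rintro y ⟨j, rfl⟩
    beta_reduce
    have hsumnn : 0 ≤ ∑ i ∈ Finset.range J, |(1-α) * α ^ i * Z (s - i) ω| :=
      Finset.sum_nonneg fun i _ => abs_nonneg _
    rcases lt_or_ge j J with hj | hj
    · calc (1-α) * α ^ j * Z (s - j) ω ≤ |(1-α) * α ^ j * Z (s - j) ω| := le_abs_self _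
        _ ≤ ∑ i ∈ Finset.range J, |(1-α) * α ^ i * Z (s - i) ω| :=
            Finset.single_le_sum (f := fun i : ℕ => |(1-α) * α ^ i * Z (s - (i:ℤ)) ω|) (fun i _ => abs_nonneg _) (a := j) (Finset.mem_range.mpr hj)
        _ ≤ 1 + ∑ i ∈ Finset.range J, |(1-α) * α ^ i * Z (s - i) ω| := by linarith
    · have h1 := hJ j hj
      rw [hD_def] at h1
      simp only [Set.mem_setOf_eq, not_lt] at h1
      linarith
  -- the event equals A up to null sets
  set E : Set Ω := {ω | ∀ s : ℤ, 1 ≤ s → s ≤ (b:ℤ) → X s ω ≤ x} with hE_def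
  have hAE : A ⊆ E := by
    intro ω hω s h1s hsb
    rw [hX]
    refine ciSup_le fun j => ?_
    rcases le_or_gt (Z (s - j) ω) 0 with hz | hz
    · exact le_trans (mul_nonpos_of_nonneg_of_nonpos
        (mul_nonneg h1α.le (pow_nonneg hα0 _)) hz) hx.le
    · have ht : (s - (j:ℤ)) ≤ (b:ℤ) := by omega
      have hcon : c (s - j) * Z (s - j) ω ≤ x := by
        have := Set.mem_iInter.mp hω (s - j)
        exact Set.mem_iInter.mp this ht
      have hm : (1 - (s - (j:ℤ))).toNat ≤ j := by omega
      have hpow : α ^ j ≤ α ^ (1 - (s - (j:ℤ))).toNat := pow_le_pow_of_le_one hα0 hα1.le hm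
      have hle : (1-α) * α ^ j * Z (s - j) ω ≤ c (s - j) * Z (s - j) ω := by
        rw [hc_def]
        exact mul_le_mul_of_nonneg_right (mul_le_mul_of_nonneg_left hpow h1α.le) hz.le
      exact hle.trans hcon
  have hEsub : E ⊆ A ∪ ⋃ s ∈ Finset.Icc (1:ℤ) (b:ℤ), N s := by
    intro ω hω
    by_cases hNmem : ω ∈ ⋃ s ∈ Finset.Icc (1:ℤ) (b:ℤ), N s
    · exact Or.inr hNmem
    · left
      simp only [Set.mem_iUnion, not_exists] at hNmem
      refine Set.mem_iInter.mpr fun t => Set.mem_iInter.mpr fun ht => ?_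
      set s : ℤ := max t 1 with hs
      have h1s : 1 ≤ s := le_max_right _ _
      have hsb : s ≤ (b:ℤ) := by omega
      have hbdd : BddAbove (Set.range fun j : ℕ => (1-α) * α ^ j * Z (s - j) ω) := by
        have h2 := hNmem s (Finset.mem_Icc.mpr ⟨h1s, hsb⟩)
        rw [hN_def] at h2
        simpa using h2
      have hXs := hω s h1s hsb
      rw [hX] at hXs
      have key := (le_ciSup hbdd ((1 - t).toNat)).trans hXs
      have hst : s - ((1 - t).toNat : ℤ) = t := by omega
      rw [hst] at key
      exact key
  have hμN : μ (⋃ s ∈ Finset.Icc (1:ℤ) (b:ℤ), N s) = 0 :=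
    (measure_biUnion_null_iff (Finset.countable_toSet _)).mpr fun s _ => hNull s
  have hEA : μ E = μ A := by
    refine le_antisymm ?_ (measure_mono hAE)
    calc μ E ≤ μ (A ∪ ⋃ s ∈ Finset.Icc (1:ℤ) (b:ℤ), N s) := measure_mono hEsub
      _ ≤ μ A + μ (⋃ s ∈ Finset.Icc (1:ℤ) (b:ℤ), N s) := measure_union_le _ _
      _ = μ A := by rw [hμN, add_zero]
  rw [hEA, hμA]
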